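/- (Strict positivity of the second derivative of the tilted cgf) Let p, q be probability distributions on a finite set Ω with common support, Λ_0(t) := log Σ_ω p(ω)^{1-t} q(ω)^t, and suppose r > -log Σ_{ω∈supp(p)} q(ω) and φ(r) := sup_{s≥0}{ s·D_{1/(1+s)}(p‖q) - sr } > 0. Then Λ_0''(t) > 0 for all t ∈ [0,1], where Λ_0''(t) equals the variance of log(q/p) under the tilted distribution q̂_t(ω) ∝ p(ω)^{1-t} q(ω)^t. -/

import Mathlib

open scoped BigOperators

noncomputable section

variable {Ω : Type*} [Fintype Ω]

/-- The tilted cumulant generating function `Λ₀(t) = log Σ p^{1-t} q^t`. -/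
def cgf0 (p q : Ω → ℝ) (t : ℝ) : ℝ := Real.log (∑ ω, p ω ^ (1 - t) * q ω ^ t)

/-- The tilted distribution `q̂_t ∝ p^{1-t} q^t`. -/
def tilted (p q : Ω → ℝ) (t : ℝ) (ω : Ω) : ℝ :=
  p ω ^ (1 - t) * q ω ^ t / ∑ ω', p ω' ^ (1 - t) * q ω' ^ t

/-- The Hoeffding exponent `φ(r) = sup_{s ≥ 0} { s D_{1/(1+s)}(p‖q) - s r }`, expressed
via `s D_{1/(1+s)}(p‖q) = -(1+s) Λ₀(s/(1+s))`. -/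
def hoeffdingLF (p q : Ω → ℝ) (r : ℝ) : ℝ :=
  ⨆ s : Set.Ici (0 : ℝ), (-(1 + (s : ℝ)) * cgf0 p q ((s : ℝ) / (1 + (s : ℝ))) - (s : ℝ) * r)

/-- Strict positivity of the second derivative of the tilted cgf, where
`Λ₀''(t) = Var_{q̂_t}[log(q/p)]`. -/
theorem cgf0_second_deriv_pos (p q : Ω → ℝ)
    (hp0 : ∀ ω, 0 ≤ p ω) (hp1 : ∑ ω, p ω = 1)
    (hq0 : ∀ ω, 0 ≤ q ω) (hq1 : ∑ ω, q ω = 1)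
    (hsupp : ∀ ω, 0 < p ω ↔ 0 < q ω)
    (r : ℝ) (hr : -Real.log (∑ ω ∈ Finset.univ.filter (fun ω => 0 < p ω), q ω) < r)
    (hφ : 0 < hoeffdingLF p q r) :
    ∀ t ∈ Set.Icc (0 : ℝ) 1,
      0 < (∑ ω, tilted p q t ω * (Real.log (q ω / p ω)) ^ 2) -
            (∑ ω, tilted p q t ω * Real.log (q ω / p ω)) ^ 2 := by
  intro t ht
  by_cases hpq : ∀ ω, p ω = q ω
  · exfalso
    have hr0 : 0 < r := by
      have hsum : ∑ ω ∈ Finset.univ.filter (fun ω => 0 < p ω), q ω = 1 := by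
        rw [← hq1]
        apply Finset.sum_subset (Finset.filter_subset _ _)
        intro ω _ hω
        simp only [Finset.mem_filter, Finset.mem_univ, true_and] at hω
        have : ¬ 0 < q ω := fun h => hω ((hsupp ω).mpr h)
        linarith [hq0 ω]
      rw [hsum, Real.log_one] at hr; linarith
    have hle : hoeffdingLF p q r ≤ 0 := by
      apply ciSup_le
      rintro ⟨s, hs⟩
      have hs0 : (0:ℝ) ≤ s := hs
      have h1s : (0:ℝ) < 1 + s := by linarith
      have hexp : 1 - s / (1 + s) = 1 / (1 + s) := by field_simp; ring
      have hcgf : cgf0 p q (s / (1 + s)) = 0 := by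
        unfold cgf0
        have hsum1 : ∑ ω, p ω ^ (1 - s/(1+s)) * q ω ^ (s/(1+s)) = ∑ ω, p ω := by
          apply Finset.sum_congr rfl
          intro ω _
          rw [← hpq ω]
          rcases eq_or_lt_of_le (hp0 ω) with h | h
          · rw [← h, Real.zero_rpow (by rw [hexp]; positivity)]
            ring
          · rw [← Real.rpow_add h]
            have h2 : 1 - s / (1 + s) + s / (1 + s) = 1 := by ring
            rw [h2, Real.rpow_one]
        rw [hsum1, hp1, Real.log_one]
      simp only [hcgf]
      nlinarith
    linarith
  · push_neg at hpq
    obtain ⟨ω₀, hω₀⟩ := hpq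
    -- existence of a point where q > p and one where q < p
    have hex1 : ∃ ω, p ω < q ω := by
      by_contra h
      push_neg at h
      have hlt : ∑ ω, q ω < ∑ ω, p ω :=
        Finset.sum_lt_sum (fun ω _ => h ω)
          ⟨ω₀, Finset.mem_univ _, lt_of_le_of_ne (h ω₀) hω₀.symm⟩
      rw [hp1, hq1] at hlt
      exact lt_irrefl _ hlt
    have hex2 : ∃ ω, q ω < p ω := by
      by_contra h
      push_neg at h
      have hlt : ∑ ω, p ω < ∑ ω, q ω :=
        Finset.sum_lt_sum (fun ω _ => h ω)
          ⟨ω₀, Finset.mem_univ _, lt_of_le_of_ne (h ω₀) hω₀⟩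
      rw [hp1, hq1] at hlt
      exact lt_irrefl _ hlt
    obtain ⟨ω₁, hω₁⟩ := hex1
    obtain ⟨ω₂, hω₂⟩ := hex2
    have hq₁ : 0 < q ω₁ := lt_of_le_of_lt (hp0 ω₁) hω₁
    have hp₁ : 0 < p ω₁ := (hsupp ω₁).mpr hq₁
    have hp₂ : 0 < p ω₂ := lt_of_le_of_lt (hq0 ω₂) hω₂
    have hq₂ : 0 < q ω₂ := (hsupp ω₂).mp hp₂
    set x : Ω → ℝ := fun ω => Real.log (q ω / p ω) with hx
    have hx₁ : 0 < x ω₁ := Real.log_pos ((one_lt_div hp₁).mpr hω₁)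
    have hx₂ : x ω₂ < 0 := Real.log_neg (div_pos hq₂ hp₂) ((div_lt_one hp₂).mpr hω₂)
    -- the normalization constant
    set S : ℝ := ∑ ω', p ω' ^ (1 - t) * q ω' ^ t with hS
    have hterm_nonneg : ∀ ω, 0 ≤ p ω ^ (1 - t) * q ω ^ t := fun ω => by
      have := hp0 ω; have := hq0 ω; positivity
    have hSpos : 0 < S := by
      apply Finset.sum_pos' (fun ω _ => hterm_nonneg ω)
      exact ⟨ω₁, Finset.mem_univ _,
        mul_pos (Real.rpow_pos_of_pos hp₁ _) (Real.rpow_pos_of_pos hq₁ _)⟩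
    set w : Ω → ℝ := tilted p q t with hw
    have hw_nonneg : ∀ ω, 0 ≤ w ω := fun ω =>
      div_nonneg (hterm_nonneg ω) hSpos.le
    have hw_sum : ∑ ω, w ω = 1 := by
      simp only [hw, tilted, ← hS]
      rw [← Finset.sum_div, div_self hSpos.ne']
    have hw₁ : 0 < w ω₁ :=
      div_pos (mul_pos (Real.rpow_pos_of_pos hp₁ _) (Real.rpow_pos_of_pos hq₁ _)) hSpos
    have hw₂ : 0 < w ω₂ :=
      div_pos (mul_pos (Real.rpow_pos_of_pos hp₂ _) (Real.rpow_pos_of_pos hq₂ _)) hSpos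
    set m : ℝ := ∑ ω, w ω * x ω with hm
    have key : ∑ ω, w ω * (x ω - m) ^ 2 =
        (∑ ω, w ω * x ω ^ 2) - (∑ ω, w ω * x ω) ^ 2 := by
      have expand : ∀ ω, w ω * (x ω - m) ^ 2 =
          w ω * x ω ^ 2 - 2 * m * (w ω * x ω) + m ^ 2 * w ω := fun ω => by ring
      simp_rw [expand]
      rw [Finset.sum_add_distrib, Finset.sum_sub_distrib, ← Finset.mul_sum,
        ← Finset.mul_sum, hw_sum, ← hm]
      ring
    rw [← key]
    -- one of ω₁, ω₂ has x ≠ m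
    have hne : x ω₁ ≠ m ∨ x ω₂ ≠ m := by
      by_contra h
      push_neg at h
      rw [h.1] at hx₁
      rw [h.2] at hx₂
      linarith
    apply Finset.sum_pos' (fun ω _ => mul_nonneg (hw_nonneg ω) (sq_nonneg _))
    rcases hne with h | h
    · exact ⟨ω₁, Finset.mem_univ _, mul_pos hw₁
        (lt_of_le_of_ne (sq_nonneg _) (Ne.symm (pow_ne_zero 2 (sub_ne_zero.mpr h))))⟩
    · exact ⟨ω₂, Finset.mem_univ _, mul_pos hw₂
        (lt_of_le_of_ne (sq_nonneg _) (Ne.symm (pow_ne_zero 2 (sub_ne_zero.mpr h))))⟩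

end
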